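/- Let w : ℝ → ℝ be three times differentiable and satisfy the Painlevé II equation w''(z) = 2·w(z)³ + z·w(z). Define u(x,t) = (3t)^{-1/3}·w(x·(3t)^{-1/3}) for t > 0. Then u satisfies the modified Korteweg–de Vries equation u_t - 6·u²·u_x + u_xxx = 0 on ℝ × (0,∞). -/

import Mathlib

/-- Self-similar Painlevé II solutions give solutions of the mKdV equation:
if `w'' = 2w³ + zw` and `u(x,t) = (3t)^{-1/3} w(x (3t)^{-1/3})` for `t > 0`, then
`u_t - 6 u² u_x + u_xxx = 0`. -/
theorem painleveII_selfSimilar_mKdV (w w₁ w₂ w₃ : ℝ → ℝ)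
    (h1 : ∀ z, HasDerivAt w (w₁ z) z)
    (h2 : ∀ z, HasDerivAt w₁ (w₂ z) z)
    (h3 : ∀ z, HasDerivAt w₂ (w₃ z) z)
    (hPII : ∀ z, w₂ z = 2 * w z ^ 3 + z * w z)
    (u : ℝ → ℝ → ℝ)
    (hu : ∀ x t, u x t = (3 * t) ^ (-(1/3) : ℝ) * w (x * (3 * t) ^ (-(1/3) : ℝ))) :
    ∀ x t, 0 < t →
      deriv (fun s => u x s) t - 6 * u x t ^ 2 * deriv (fun y => u y t) x
        + iteratedDeriv 3 (fun y => u y t) x = 0 := by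
  -- Differentiate the Painlevé II relation to get a formula for w₃.
  have hw2fun : w₂ = fun z => 2 * w z ^ 3 + z * w z := funext hPII
  have hw3 : ∀ z, w₃ z = 6 * w z ^ 2 * w₁ z + w z + z * w₁ z := by
    intro z
    have hrhs : HasDerivAt (fun z => 2 * w z ^ 3 + z * w z)
        (2 * ((3 : ℕ) * w z ^ (3 - 1) * w₁ z) + (1 * w z + z * w₁ z)) z :=
      (((h1 z).pow 3).const_mul 2).add ((hasDerivAt_id z).mul (h1 z))
    have h3' : HasDerivAt (fun z => 2 * w z ^ 3 + z * w z) (w₃ z) z := by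
      rw [← hw2fun]; exact h3 z
    have := h3'.unique hrhs
    rw [this]; norm_num; ring
  intro x t ht
  have h3t : (0 : ℝ) < 3 * t := by linarith
  set p : ℝ := (3 * t) ^ (-(1/3) : ℝ) with hp
  -- key rpow identity
  have hq : (3 * t) ^ ((-(1/3) : ℝ) - 1) = p ^ 4 := by
    have h4 : ((-(1/3) : ℝ) - 1) = (-(1/3) : ℝ) * ((4 : ℕ) : ℝ) := by norm_num
    rw [h4, Real.rpow_mul h3t.le, Real.rpow_natCast]
  -- spatial function
  have hux : (fun y => u y t) = fun y => p * w (y * p) := funext fun y => hu y t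
  -- first spatial derivative (as a function)
  have hD1 : ∀ y : ℝ, HasDerivAt (fun y => p * w (y * p)) (p * (w₁ (y * p) * p)) y :=
    fun y => ((h1 (y * p)).comp y (hasDerivAt_mul_const p)).const_mul p
  have hd1 : deriv (fun y => p * w (y * p)) = fun y => p * (w₁ (y * p) * p) :=
    funext fun y => (hD1 y).deriv
  -- second spatial derivative (as a function)
  have hD2 : ∀ y : ℝ, HasDerivAt (fun y => p * (w₁ (y * p) * p)) (p * (w₂ (y * p) * p * p)) y :=
    fun y => (((h2 (y * p)).comp y (hasDerivAt_mul_const p)).mul_const p).const_mul p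
  have hd2 : deriv (fun y => p * (w₁ (y * p) * p)) = fun y => p * (w₂ (y * p) * p * p) :=
    funext fun y => (hD2 y).deriv
  -- third spatial derivative at x
  have hD3 : HasDerivAt (fun y => p * (w₂ (y * p) * p * p)) (p * (w₃ (x * p) * p * p * p)) x :=
    ((((h3 (x * p)).comp x (hasDerivAt_mul_const p)).mul_const p).mul_const p).const_mul p
  -- time derivative
  have hut : (fun s => u x s)
      = fun s => (3 * s) ^ (-(1/3) : ℝ) * w (x * (3 * s) ^ (-(1/3) : ℝ)) :=
    funext fun s => hu x s
  have hg : HasDerivAt (fun s : ℝ => (3 * s) ^ (-(1/3) : ℝ))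
      ((-(1/3) : ℝ) * (3 * t) ^ ((-(1/3) : ℝ) - 1) * 3) t := by
    have h0 : HasDerivAt (fun s : ℝ => 3 * s) 3 t := by
      simpa using (hasDerivAt_id t).const_mul (3 : ℝ)
    have := (Real.hasDerivAt_rpow_const (p := (-(1/3) : ℝ)) (x := 3 * t)
      (Or.inl h3t.ne')).comp t h0
    simpa [Function.comp_def, mul_assoc] using this
  have hT : HasDerivAt (fun s => (3 * s) ^ (-(1/3) : ℝ) * w (x * (3 * s) ^ (-(1/3) : ℝ)))
      (((-(1/3) : ℝ) * (3 * t) ^ ((-(1/3) : ℝ) - 1) * 3) * w (x * p)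
        + p * (w₁ (x * p) * (x * ((-(1/3) : ℝ) * (3 * t) ^ ((-(1/3) : ℝ) - 1) * 3)))) t :=
    hg.mul ((h1 (x * p)).comp t (hg.const_mul x))
  -- assemble
  rw [hux, hut, hT.deriv, hd1, hu x t]
  rw [show iteratedDeriv 3 (fun y => p * w (y * p)) x
      = deriv (deriv (deriv (fun y => p * w (y * p)))) x by
    simp [iteratedDeriv_succ, iteratedDeriv_zero]]
  rw [hd1, hd2, hD3.deriv, hq, hw3 (x * p)]
  ring
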